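/- Let n, d be natural numbers and let A : Fin d → Matrix (Fin n) (Fin n) ℂ be a family of pairwise commuting matrices (∀ i j, Commute (A i) (A j)). Then there exists λ : Fin n → Fin d → ℂ such that for every v : Fin d → ℂ, det(∑ j, v j • A j) = ∏ a, (∑ j, v j * λ a j). -/

import Mathlib

open Module LinearMap Set

section Aux

variable {M : Type*} [AddCommGroup M] [Module ℂ M] [FiniteDimensional ℂ M]

lemma aux_det_blockDiagonal' {ι : Type*} [Fintype ι] [DecidableEq ι]
    {κ : ι → Type*} [∀ i, Fintype (κ i)] [∀ i, DecidableEq (κ i)]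
    (M : ∀ i, Matrix (κ i) (κ i) ℂ) :
    (Matrix.blockDiagonal' M).det = ∏ i, (M i).det := by
  classical
  letI : LinearOrder ι := LinearOrder.lift' (Fintype.equivFin ι) (Fintype.equivFin ι).injective
  rw [(Matrix.blockTriangular_blockDiagonal' M).det_fintype]
  refine Finset.prod_congr rfl fun i _ => ?_
  let e : κ i ≃ {p : (Σ j, κ j) // p.1 = i} :=
    ⟨fun k => ⟨⟨i, k⟩, rfl⟩,
     fun p => cast (congrArg κ p.2) p.1.2,
     fun k => rfl,
     fun p => by rcases p with ⟨⟨j, k⟩, h⟩; subst h; rfl⟩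
  rw [← Matrix.det_submatrix_equiv_self e ((Matrix.blockDiagonal' M).toSquareBlock Sigma.fst i)]
  congr 1
  ext k l
  simp [Matrix.toSquareBlock_def, e, Matrix.blockDiagonal'_apply_eq]

lemma aux_det_eq_prod_det_restrict {ι : Type*} [Fintype ι] [DecidableEq ι]
    {N : ι → Submodule ℂ M} (h : DirectSum.IsInternal N)
    {f : Module.End ℂ M} (hf : ∀ i, MapsTo f (N i) (N i)) :
    LinearMap.det f = ∏ i, LinearMap.det (f.restrict (hf i)) := by
  classical
  let b : (i : ι) → Basis _ ℂ (N i) := fun i ↦ Module.Free.chooseBasis ℂ (N i)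
  rw [← LinearMap.det_toMatrix (h.collectedBasis b),
    LinearMap.toMatrix_directSum_collectedBasis_eq_blockDiagonal' h h b b hf,
    aux_det_blockDiagonal']
  simp_rw [LinearMap.det_toMatrix]

lemma aux_det_eq_pow (c : ℂ) (g : Module.End ℂ M)
    (hg : IsNilpotent (g - c • (1 : Module.End ℂ M))) :
    LinearMap.det g = c ^ Module.finrank ℂ M := by
  classical
  set m := Module.finrank ℂ M with hm
  set Ng := g - c • (1 : Module.End ℂ M) with hNgdef
  have hchar : Ng.charpoly = Polynomial.X ^ m := hg.charpoly_eq_X_pow_finrank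
  let b : Basis (Fin m) ℂ M := Module.finBasis ℂ M
  set B : Matrix (Fin m) (Fin m) ℂ := LinearMap.toMatrix b b Ng with hB
  have hcharB : B.charpoly = Polynomial.X ^ m := by
    rw [hB, LinearMap.charpoly_toMatrix, hchar]
  have hGB : LinearMap.toMatrix b b g = c • (1 : Matrix (Fin m) (Fin m) ℂ) + B := by
    have hgeq : g = c • (1 : Module.End ℂ M) + Ng := by rw [hNgdef]; abel
    rw [hgeq, map_add, map_smul, LinearMap.toMatrix_one]
  have key : ((-c : ℂ)) ^ m = (Matrix.scalar (Fin m) (-c) - B).det := by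
    have h1 := eval_det (Matrix.charmatrix B) (-c)
    rw [← Matrix.charpoly, hcharB, Matrix.matPolyEquiv_charmatrix] at h1
    simpa using h1
  have hscalar : Matrix.scalar (Fin m) (-c) - B = -(c • 1 + B) := by
    ext i j
    rcases eq_or_ne i j with rfl | hij
    · simp [Matrix.scalar_apply, Matrix.diagonal_apply, Matrix.one_apply]; ring
    · simp [Matrix.scalar_apply, Matrix.diagonal_apply, hij, Matrix.one_apply]
  rw [← LinearMap.det_toMatrix b, hGB]
  rw [hscalar, Matrix.det_neg, Fintype.card_fin] at key
  have h3 : ((-1 : ℂ)) ^ m * ((-c) ^ m) = c ^ m := by rw [← mul_pow]; ring_nf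
  have h4 := congrArg (fun z => ((-1 : ℂ)) ^ m * z) key
  rw [h3] at h4
  rw [h4, ← mul_assoc, ← mul_pow]
  norm_num

end Aux

theorem det_linear_combination_commuting_factors
    (n d : ℕ) (A : Fin d → Matrix (Fin n) (Fin n) ℂ)
    (hcomm : ∀ i j, Commute (A i) (A j)) :
    ∃ lam : Fin n → Fin d → ℂ, ∀ v : Fin d → ℂ,
      (∑ j, v j • A j).det = ∏ a, (∑ j, v j * lam a j) := by
  classical
  set V := Fin n → ℂ with hV
  set f : Fin d → Module.End ℂ V := fun j => Matrix.toLin' (A j) with hf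
  have hfcomm : ∀ i j, Commute (f i) (f j) := by
    intro i j
    have h := congrArg Matrix.toLin' ((hcomm i j).eq)
    simpa [Commute, SemiconjBy, Matrix.toLin'_mul, hf, Module.End.mul_eq_comp] using h
  set N : (Fin d → ℂ) → Submodule ℂ V := fun χ => ⨅ i, (f i).maxGenEigenspace (χ i) with hN
  have hMapsToMax : ∀ i j φ, MapsTo (f i) ((f j).maxGenEigenspace φ) ((f j).maxGenEigenspace φ) :=
    fun i j φ => Module.End.mapsTo_maxGenEigenspace_of_comm (hfcomm j i) φ
  have hMapsTo : ∀ l χ, MapsTo (f l) (N χ) (N χ) := by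
    intro l χ x hx
    simp only [hN, Submodule.coe_iInf, Set.mem_iInter, SetLike.mem_coe] at hx ⊢
    exact fun i => hMapsToMax l i (χ i) (hx i)
  have h_ind : iSupIndep N :=
    Module.End.independent_iInf_maxGenEigenspace_of_forall_mapsTo f hMapsToMax
  have h_top : ⨆ χ : Fin d → ℂ, N χ = ⊤ :=
    Module.End.iSup_iInf_maxGenEigenspace_eq_top_of_iSup_maxGenEigenspace_eq_top_of_commute f
      (fun i j _ => hfcomm i j) (fun i => Module.End.iSup_maxGenEigenspace_eq_top (f i))
  have hInternal : DirectSum.IsInternal N :=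
    (DirectSum.isInternal_submodule_iff_iSupIndep_and_iSup_eq_top N).mpr ⟨h_ind, h_top⟩
  have hfin : {χ | N χ ≠ ⊥}.Finite := Submodule.finite_ne_bot_of_iSupIndep h_ind
  let ι' := {χ // N χ ≠ ⊥}
  letI : Fintype ι' := hfin.fintype
  have hI' : DirectSum.IsInternal (fun χ : ι' => N χ.1) :=
    DirectSum.isInternal_ne_bot_iff.mpr hInternal
  let bb : (χ : ι') → Basis (Fin (finrank ℂ (N χ.1))) ℂ (N χ.1) :=
    fun χ => Module.finBasis ℂ (N χ.1)
  have hcard : Fintype.card (Σ χ : ι', Fin (finrank ℂ (N χ.1))) = Fintype.card (Fin n) := by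
    rw [← Module.finrank_eq_card_basis (hI'.collectedBasis bb), Fintype.card_fin]
    exact Module.finrank_fin_fun ℂ
  let e : (Σ χ : ι', Fin (finrank ℂ (N χ.1))) ≃ Fin n := Fintype.equivOfCardEq hcard
  refine ⟨fun a => (e.symm a).1.1, fun v => ?_⟩
  have hrhs : ∏ a, (∑ j, v j * (e.symm a).1.1 j)
      = ∏ χ : ι', (∑ j, v j * χ.1 j) ^ finrank ℂ (N χ.1) := by
    rw [← Equiv.prod_comp e (fun a => ∑ j, v j * (e.symm a).1.1 j)]
    simp_rw [Equiv.symm_apply_apply]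
    rw [← Finset.univ_sigma_univ, Finset.prod_sigma]
    simp
  rw [hrhs]
  set g : Module.End ℂ V := ∑ j, v j • f j with hg
  have hdet : (∑ j, v j • A j).det = LinearMap.det g := by
    rw [← LinearMap.det_toLin' (∑ j, v j • A j)]
    congr 1
    rw [hg, map_sum]
    refine Finset.sum_congr rfl fun j _ => ?_
    rw [map_smul]
  rw [hdet]
  have hgMapsTo : ∀ χ : ι', MapsTo g (N χ.1) (N χ.1) := by
    intro χ x hx
    rw [hg]
    simp only [LinearMap.sum_apply, LinearMap.smul_apply]
    exact Submodule.sum_mem _ fun j _ => Submodule.smul_mem _ _ (hMapsTo j χ.1 hx)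
  rw [aux_det_eq_prod_det_restrict hI' hgMapsTo]
  refine Finset.prod_congr rfl fun χ _ => ?_
  refine aux_det_eq_pow _ _ ?_
  -- the shifted operators
  have hsubMapsTo : ∀ j, MapsTo (f j - χ.1 j • (1 : Module.End ℂ V)) (N χ.1) (N χ.1) := by
    intro j x hx
    have h1 : f j x - χ.1 j • x ∈ N χ.1 :=
      Submodule.sub_mem _ (hMapsTo j χ.1 hx) (Submodule.smul_mem _ _ hx)
    simpa using h1
  set gj : Fin d → Module.End ℂ (N χ.1) :=
    fun j => (f j - χ.1 j • (1 : Module.End ℂ V)).restrict (hsubMapsTo j) with hgj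
  have hrest : g.restrict (hgMapsTo χ) - (∑ j, v j * χ.1 j) • 1 = ∑ j, v j • gj j := by
    apply LinearMap.ext
    rintro ⟨x, hx⟩
    apply Subtype.ext
    simp only [LinearMap.sub_apply, LinearMap.smul_apply, Module.End.one_apply,
      LinearMap.sum_apply, LinearMap.restrict_apply, hgj, hg]
    simp only [AddSubmonoidClass.coe_finset_sum, SetLike.val_smul, LinearMap.restrict_apply,
      SetLike.mk_smul_mk, AddSubgroupClass.coe_sub, LinearMap.sum_apply, LinearMap.smul_apply,
      LinearMap.sub_apply, Module.End.one_apply]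
    rw [Finset.sum_smul]
    rw [← Finset.sum_sub_distrib]
    congr 1
    funext j
    show _ = v j • ((f j - χ.1 j • (1 : Module.End ℂ V)) x)
    rw [LinearMap.sub_apply, LinearMap.smul_apply, Module.End.one_apply, smul_sub, smul_smul]
  rw [hrest]
  -- each gj is nilpotent
  have hnil : ∀ j, IsNilpotent (gj j) := by
    intro j
    have hle : N χ.1 ≤ (f j).maxGenEigenspace (χ.1 j) := by
      exact iInf_le (fun i => (f i).maxGenEigenspace (χ.1 i)) j
    exact Module.End.isNilpotent_restrict_of_le hle
      (Module.End.isNilpotent_restrict_genEigenspace_top (f j) (χ.1 j))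
  -- the gj commute
  have hcommg : ∀ j k, Commute (gj j) (gj k) := by
    intro j k
    have hcjk : Commute (f j - χ.1 j • (1 : Module.End ℂ V))
        (f k - χ.1 k • (1 : Module.End ℂ V)) :=
      ((hfcomm j k).sub_right ((Commute.one_right _).smul_right _)).sub_left
        ((Commute.one_left _).smul_left _)
    apply LinearMap.ext
    rintro ⟨x, hx⟩
    have hx' := DFunLike.congr_fun hcjk.eq x
    simp only [Module.End.mul_apply] at hx'
    apply Subtype.ext
    simp only [Module.End.mul_apply, hgj, LinearMap.restrict_coe_apply]
    exact hx'
  exact Commute.isNilpotent_sum (fun j _ => (hnil j).smul (v j))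
    (fun j k _ _ => ((hcommg j k).smul_left (v j)).smul_right (v k))
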